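/- Let Σ_x be a real n×n positive semidefinite matrix, Φ a real ℓ×n matrix, and Σ := Σ_x^{1/2}·Φᵀ·Φ·Σ_x^{1/2}. Then MMSE(σ²) tends to 0 as σ² → 0⁺ if and only if rank(Σ) = rank(Σ_x). -/

import Mathlib

open Matrix Filter Topology

section
open scoped ComplexOrder

/-- The square root of a positive semidefinite matrix, as Mathlib defined it in December 2024
(removed since; restored here with its old definition). -/
noncomputable def Matrix.PosSemidef.sqrt {n 𝕜 : Type*} [Fintype n] [DecidableEq n] [RCLike 𝕜]
    {A : Matrix n n 𝕜} (hA : A.PosSemidef) : Matrix n n 𝕜 :=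
  hA.1.eigenvectorUnitary.1 * diagonal ((↑) ∘ (√·) ∘ hA.1.eigenvalues) *
    (star hA.1.eigenvectorUnitary : Matrix n n 𝕜)

end

section
open scoped ComplexOrder
theorem Matrix.PosSemidef.posSemidef_sqrt {n 𝕜 : Type*} [Fintype n] [DecidableEq n] [RCLike 𝕜]
    {A : Matrix n n 𝕜} (hA : A.PosSemidef) : hA.sqrt.PosSemidef := by
  unfold Matrix.PosSemidef.sqrt
  rw [star_eq_conjTranspose]
  refine Matrix.PosSemidef.mul_mul_conjTranspose_same ?_ _
  refine posSemidef_diagonal_iff.mpr fun i => ?_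
  simp only [Function.comp_apply]
  exact_mod_cast Real.sqrt_nonneg _
theorem Matrix.PosSemidef.sqrt_mul_self {n 𝕜 : Type*} [Fintype n] [DecidableEq n] [RCLike 𝕜]
    {A : Matrix n n 𝕜} (hA : A.PosSemidef) : hA.sqrt * hA.sqrt = A := by
  unfold Matrix.PosSemidef.sqrt
  have hU : star (hA.1.eigenvectorUnitary : Matrix n n 𝕜) * hA.1.eigenvectorUnitary.1 = 1 :=
    Matrix.mem_unitaryGroup_iff'.mp hA.1.eigenvectorUnitary.2
  have hD : diagonal (((↑) ∘ (√·) ∘ hA.1.eigenvalues : n → 𝕜)) *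
      diagonal ((↑) ∘ (√·) ∘ hA.1.eigenvalues) = diagonal (RCLike.ofReal ∘ hA.1.eigenvalues) := by
    rw [diagonal_mul_diagonal]
    congr 1; funext i
    simp only [Function.comp_apply]
    rw [← RCLike.ofReal_mul, Real.mul_self_sqrt (hA.eigenvalues_nonneg i)]
  conv_rhs => rw [hA.1.spectral_theorem]
  calc _ = hA.1.eigenvectorUnitary.1 * diagonal (((↑) ∘ (√·) ∘ hA.1.eigenvalues : n → 𝕜)) *
      (star (hA.1.eigenvectorUnitary : Matrix n n 𝕜) * hA.1.eigenvectorUnitary.1) *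
      diagonal ((↑) ∘ (√·) ∘ hA.1.eigenvalues) * star (hA.1.eigenvectorUnitary : Matrix n n 𝕜) := by
        simp only [Matrix.mul_assoc]
    _ = _ := by
        rw [hU, Matrix.mul_one, Matrix.mul_assoc _ (diagonal _) (diagonal _), hD]
        rfl
end

/-- MMSE(σ²) → 0 as σ² → 0⁺ iff rank(Σ) = rank(Σ_x), where
Σ = Σ_x^{1/2}·Φᵀ·Φ·Σ_x^{1/2}. -/
theorem stmt_4 {n l : ℕ} (Sx : Matrix (Fin n) (Fin n) ℝ) (hSx : Sx.PosSemidef)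
    (Φ : Matrix (Fin l) (Fin n) ℝ) :
    Tendsto (fun σ2 : ℝ =>
        (Sx - Sx * Φᵀ * (σ2 • (1 : Matrix (Fin l) (Fin l) ℝ) + Φ * Sx * Φᵀ)⁻¹ * Φ * Sx).trace)
      (nhdsWithin 0 (Set.Ioi 0)) (nhds 0)
    ↔ (hSx.sqrt * Φᵀ * Φ * hSx.sqrt).rank = Sx.rank := by
  classical
  set S := hSx.sqrt with hSdef
  have hS : S.PosSemidef := hSx.posSemidef_sqrt
  have hSsymm : Sᵀ = S := by
    have h : Sᴴ = S := hS.1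
    rwa [conjTranspose_eq_transpose_of_trivial] at h
  have hSS : S * S = Sx := hSx.sqrt_mul_self
  set A := Φ * S with hAdef
  have hAT : Aᵀ = S * Φᵀ := by rw [hAdef, transpose_mul, hSsymm]
  set Sig := S * Φᵀ * Φ * S with hSigdef
  have hSigA : Sig = Aᵀ * A := by rw [hAT, hAdef, hSigdef, Matrix.mul_assoc]
  have hSigpsd : Sig.PosSemidef := by
    rw [hSigA, ← conjTranspose_eq_transpose_of_trivial]
    exact posSemidef_conjTranspose_mul_self A
  have hSigh : Sig.IsHermitian := hSigpsd.1
  set μ := hSigh.eigenvalues with hμdef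
  have hμ0 : ∀ i, 0 ≤ μ i := hSigpsd.eigenvalues_nonneg
  set U : Matrix (Fin n) (Fin n) ℝ := (hSigh.eigenvectorUnitary : Matrix (Fin n) (Fin n) ℝ)
    with hUdef
  have hU1 : U * star U = 1 := Matrix.mem_unitaryGroup_iff.mp hSigh.eigenvectorUnitary.2
  have hU2 : star U * U = 1 := Matrix.mem_unitaryGroup_iff'.mp hSigh.eigenvectorUnitary.2
  have hspec : Sig = U * diagonal μ * star U := by
    have h := hSigh.spectral_theorem
    simpa [RCLike.ofReal_real_eq_id] using h
  set c : Fin n → ℝ := fun i => (fun j => (S * U) j i) ⬝ᵥ (fun j => (S * U) j i) with hcdef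
  have hc0 : ∀ i, 0 ≤ c i := fun i => Finset.sum_nonneg fun j _ => mul_self_nonneg _
  -- key trace formula
  have key : ∀ σ : ℝ, σ ∈ Set.Ioi (0:ℝ) →
      (Sx - Sx * Φᵀ * (σ • (1 : Matrix (Fin l) (Fin l) ℝ) + Φ * Sx * Φᵀ)⁻¹ * Φ * Sx).trace
        = ∑ i, σ * (σ + μ i)⁻¹ * c i := by
    intro σ hσ
    rw [Set.mem_Ioi] at hσ
    set B := σ • (1 : Matrix (Fin l) (Fin l) ℝ) + Φ * Sx * Φᵀ with hBdef
    have hBA : B = σ • 1 + A * Aᵀ := by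
      rw [hBdef, hAdef, hAT, ← hSS]
      simp only [Matrix.mul_assoc]
    have hsmul_pd : ∀ m : ℕ, (σ • (1 : Matrix (Fin m) (Fin m) ℝ)).PosDef := by
      intro m
      rw [smul_one_eq_diagonal]
      exact posDef_diagonal_iff.mpr fun _ => hσ
    have hBpd : B.PosDef := by
      rw [hBA, add_comm]
      exact Matrix.PosDef.posSemidef_add
        (by rw [← conjTranspose_eq_transpose_of_trivial]
            exact posSemidef_self_mul_conjTranspose A) (hsmul_pd l)
    set C := σ • (1 : Matrix (Fin n) (Fin n) ℝ) + Sig with hCdef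
    have hCpd : C.PosDef := by
      rw [hCdef]
      exact (hsmul_pd n).add_posSemidef hSigpsd
    have hgpos : ∀ i, 0 < σ + μ i := fun i => add_pos_of_pos_of_nonneg hσ (hμ0 i)
    have hCspec : C = U * diagonal (fun i => σ + μ i) * star U := by
      have h1 : σ • (1 : Matrix (Fin n) (Fin n) ℝ) = U * (σ • 1) * star U := by
        rw [Matrix.mul_smul, mul_one, Matrix.smul_mul, hU1]
      rw [hCdef, hspec, h1, ← Matrix.add_mul, ← Matrix.mul_add, smul_one_eq_diagonal,
        diagonal_add]
    have hCinv : C⁻¹ = U * diagonal (fun i => (σ + μ i)⁻¹) * star U := by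
      apply inv_eq_right_inv
      rw [hCspec]
      calc U * diagonal (fun i => σ + μ i) * star U * (U * diagonal (fun i => (σ + μ i)⁻¹) * star U)
          = U * diagonal (fun i => σ + μ i) * (star U * U) * diagonal (fun i => (σ + μ i)⁻¹)
            * star U := by simp only [Matrix.mul_assoc]
        _ = U * (diagonal (fun i => σ + μ i) * diagonal (fun i => (σ + μ i)⁻¹)) * star U := by
            rw [hU2]; simp only [Matrix.mul_one, Matrix.mul_assoc]
        _ = 1 := by
            rw [diagonal_mul_diagonal]
            have : (fun i => (σ + μ i) * (σ + μ i)⁻¹) = fun _ : Fin n => (1:ℝ) := by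
              funext i; exact mul_inv_cancel₀ (hgpos i).ne'
            rw [this, diagonal_one, mul_one, hU1]
    have hdetB : IsUnit B.det := (isUnit_iff_isUnit_det _).mp hBpd.isUnit
    have hdetC : IsUnit C.det := (isUnit_iff_isUnit_det _).mp hCpd.isUnit
    have hcomm : C * Aᵀ = Aᵀ * B := by
      rw [hCdef, hBA, hSigA]
      simp only [Matrix.add_mul, Matrix.mul_add, Matrix.smul_mul, Matrix.mul_smul,
        Matrix.one_mul, Matrix.mul_one, Matrix.mul_assoc]
    have hpush : Aᵀ * B⁻¹ = C⁻¹ * Aᵀ := by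
      calc Aᵀ * B⁻¹ = C⁻¹ * C * Aᵀ * B⁻¹ := by rw [nonsing_inv_mul C hdetC, Matrix.one_mul]
        _ = C⁻¹ * (C * Aᵀ) * B⁻¹ := by simp only [Matrix.mul_assoc]
        _ = C⁻¹ * (Aᵀ * B) * B⁻¹ := by rw [hcomm]
        _ = C⁻¹ * Aᵀ * (B * B⁻¹) := by simp only [Matrix.mul_assoc]
        _ = C⁻¹ * Aᵀ := by rw [mul_nonsing_inv B hdetB, Matrix.mul_one]
    have hmain : Sx - Sx * Φᵀ * B⁻¹ * Φ * Sx = σ • (S * C⁻¹ * S) := by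
      have e1 : Sx - Sx * Φᵀ * B⁻¹ * Φ * Sx = S * S - S * (Aᵀ * B⁻¹ * A) * S := by
        rw [hAT, hAdef, ← hSS]
        simp only [Matrix.mul_assoc]
      have e2 : Aᵀ * B⁻¹ * A = C⁻¹ * Sig := by rw [hpush, Matrix.mul_assoc, ← hSigA]
      have e3 : (1 : Matrix (Fin n) (Fin n) ℝ) - C⁻¹ * Sig = σ • C⁻¹ := by
        have h4 : C⁻¹ * C - C⁻¹ * Sig = σ • C⁻¹ := by
          rw [hCdef, Matrix.mul_add, Matrix.mul_smul, mul_one]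
          abel
        rwa [nonsing_inv_mul C hdetC] at h4
      calc Sx - Sx * Φᵀ * B⁻¹ * Φ * Sx = S * S - S * (C⁻¹ * Sig) * S := by rw [e1, e2]
        _ = S * ((1 : Matrix (Fin n) (Fin n) ℝ) - C⁻¹ * Sig) * S := by
            simp only [Matrix.mul_sub, Matrix.sub_mul, Matrix.mul_one]
        _ = S * (σ • C⁻¹) * S := by rw [e3]
        _ = σ • (S * C⁻¹ * S) := by rw [Matrix.mul_smul, Matrix.smul_mul]
    rw [hmain, trace_smul, hCinv]
    have e5 : S * (U * diagonal (fun i => (σ + μ i)⁻¹) * star U) * S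
        = S * U * diagonal (fun i => (σ + μ i)⁻¹) * (star U * S) := by
          simp only [Matrix.mul_assoc]
    rw [e5, trace_mul_cycle]
    have e6 : star U * S * (S * U) = (S * U)ᵀ * (S * U) := by
      rw [transpose_mul, hSsymm, star_eq_conjTranspose, conjTranspose_eq_transpose_of_trivial]
    rw [e6]
    have e7 : ((S * U)ᵀ * (S * U) * diagonal fun i => (σ + μ i)⁻¹).trace
        = ∑ i, c i * (σ + μ i)⁻¹ := by
      rw [Matrix.trace]
      refine Finset.sum_congr rfl fun i _ => ?_
      rw [Matrix.diag_apply, mul_diagonal]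
      have hci : ((S * U)ᵀ * (S * U)) i i = c i := by
        simp [mul_apply, hcdef, dotProduct, mul_comm]
      rw [hci]
    rw [e7, smul_eq_mul, Finset.mul_sum]
    exact Finset.sum_congr rfl fun i _ => by ring
  -- the limit of the explicit formula
  set L := ∑ i, (if μ i = 0 then c i else 0) with hLdef
  have hlim : Tendsto (fun σ : ℝ => ∑ i, σ * (σ + μ i)⁻¹ * c i) (𝓝[>] (0:ℝ)) (𝓝 L) := by
    rw [hLdef]
    apply tendsto_finset_sum
    intro i _
    by_cases h : μ i = 0
    · rw [if_pos h]
      apply Tendsto.congr' ?_ tendsto_const_nhds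
      filter_upwards [self_mem_nhdsWithin] with σ hσ
      rw [Set.mem_Ioi] at hσ
      rw [h, add_zero, mul_inv_cancel₀ hσ.ne', one_mul]
    · rw [if_neg h]
      have hμpos : (0:ℝ) + μ i ≠ 0 := by
        rw [zero_add]; exact h
      have h1 : Tendsto (fun σ:ℝ => σ * (σ + μ i)⁻¹ * c i) (𝓝 0)
          (𝓝 (0 * ((0:ℝ) + μ i)⁻¹ * c i)) :=
        ((tendsto_id.mul ((tendsto_id.add tendsto_const_nhds).inv₀ hμpos)).mul
          tendsto_const_nhds)
      simpa using h1.mono_left nhdsWithin_le_nhds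
  -- chain of equivalences
  have heq : (fun σ2 : ℝ =>
        (Sx - Sx * Φᵀ * (σ2 • (1 : Matrix (Fin l) (Fin l) ℝ) + Φ * Sx * Φᵀ)⁻¹ * Φ * Sx).trace)
      =ᶠ[𝓝[>] (0:ℝ)] (fun σ : ℝ => ∑ i, σ * (σ + μ i)⁻¹ * c i) :=
    eventuallyEq_of_mem self_mem_nhdsWithin key
  have hiff1 : Tendsto (fun σ2 : ℝ =>
        (Sx - Sx * Φᵀ * (σ2 • (1 : Matrix (Fin l) (Fin l) ℝ) + Φ * Sx * Φᵀ)⁻¹ * Φ * Sx).trace)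
      (𝓝[>] (0:ℝ)) (𝓝 0) ↔ L = 0 := by
    constructor
    · intro h
      exact (tendsto_nhds_unique ((tendsto_congr' heq).mp h) hlim).symm
    · intro h
      exact (tendsto_congr' heq).mpr (h ▸ hlim)
  have hLiff : L = 0 ↔ ∀ i, μ i = 0 → c i = 0 := by
    rw [hLdef, Finset.sum_eq_zero_iff_of_nonneg (fun i _ => by split_ifs with h; exacts [hc0 i, le_rfl])]
    constructor
    · intro h i hi
      have := h i (Finset.mem_univ i)
      rwa [if_pos hi] at this
    · intro h i _
      by_cases hi : μ i = 0
      · rw [if_pos hi]; exact h i hi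
      · rw [if_neg hi]
  have hciff : ∀ i, c i = 0 ↔ (fun j => (S * U) j i) = (0 : Fin n → ℝ) := fun i =>
    dotProduct_self_eq_zero
  -- kernel inclusion
  have hkle : LinearMap.ker S.mulVecLin ≤ LinearMap.ker A.mulVecLin := by
    intro v hv
    rw [LinearMap.mem_ker] at hv ⊢
    rw [hAdef, mulVecLin_mul, LinearMap.comp_apply, hv, map_zero]
  -- rank equivalence
  have hrank : (Sig.rank = Sx.rank) ↔
      LinearMap.ker A.mulVecLin = LinearMap.ker S.mulVecLin := by
    have h1 : Sig.rank = A.rank := by rw [hSigA]; exact rank_transpose_mul_self A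
    have h2 : Sx.rank = S.rank := by
      have : Sx = Sᵀ * S := by rw [hSsymm, hSS]
      rw [this]
      exact rank_transpose_mul_self S
    rw [h1, h2, Matrix.rank, Matrix.rank]
    have hA' := LinearMap.finrank_range_add_finrank_ker A.mulVecLin
    have hS' := LinearMap.finrank_range_add_finrank_ker S.mulVecLin
    constructor
    · intro h
      refine (Submodule.eq_of_le_of_finrank_eq hkle ?_).symm
      omega
    · intro h
      have : Module.finrank ℝ (LinearMap.ker A.mulVecLin)
          = Module.finrank ℝ (LinearMap.ker S.mulVecLin) := by rw [h]
      omega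
  -- kernel equality iff the column condition
  have hcond : (LinearMap.ker A.mulVecLin = LinearMap.ker S.mulVecLin)
      ↔ (∀ i, μ i = 0 → (fun j => (S * U) j i) = (0 : Fin n → ℝ)) := by
    constructor
    · intro hk i hi
      set u : Fin n → ℝ := fun k => U k i with hudef
      have hcolS : ∀ (M : Matrix (Fin n) (Fin n) ℝ) (j : Fin n), (M *ᵥ u) j = (M * U) j i := by
        intro M j
        simp [hudef, mulVec, mul_apply, dotProduct]
      have hSigu : Sig *ᵥ u = 0 := by
        funext j
        rw [hcolS]
        have hSU : Sig * U = U * diagonal μ := by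
          rw [hspec, Matrix.mul_assoc, Matrix.mul_assoc, hU2, Matrix.mul_one]
        rw [hSU, mul_diagonal, hi, mul_zero]
        rfl
      have hAu : A *ᵥ u = 0 := by
        have h0 : u ⬝ᵥ (Sig *ᵥ u) = 0 := by rw [hSigu, dotProduct_zero]
        rw [hSigA, ← mulVec_mulVec, dotProduct_mulVec, vecMul_transpose] at h0
        exact dotProduct_self_eq_zero.mp h0
      have hu : u ∈ LinearMap.ker A.mulVecLin := by
        rw [LinearMap.mem_ker, mulVecLin_apply, hAu]
      rw [hk, LinearMap.mem_ker, mulVecLin_apply] at hu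
      funext j
      have := congrFun hu j
      rw [← hcolS S j] at *
      simpa using this
    · intro hcol
      refine le_antisymm ?_ hkle
      intro v hv
      rw [LinearMap.mem_ker, mulVecLin_apply] at hv ⊢
      have hSigv : Sig *ᵥ v = 0 := by
        rw [hSigA, ← mulVec_mulVec, hv, mulVec_zero]
      set w : Fin n → ℝ := star U *ᵥ v with hwdef
      have hμw : ∀ i, μ i * w i = 0 := by
        intro i
        have hDU : diagonal μ * star U = star U * Sig := by
          rw [hspec, ← Matrix.mul_assoc, ← Matrix.mul_assoc, hU2, Matrix.one_mul]
        have h5 : (diagonal μ *ᵥ w) i = 0 := by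
          rw [hwdef, mulVec_mulVec, hDU, ← mulVec_mulVec, hSigv, mulVec_zero]
          rfl
        rwa [mulVec_diagonal] at h5
      have hvU : U *ᵥ w = v := by
        rw [hwdef, mulVec_mulVec, hU1, one_mulVec]
      have : S *ᵥ v = (S * U) *ᵥ w := by rw [← hvU, mulVec_mulVec]
      rw [this]
      funext j
      rw [mulVec, dotProduct]
      apply Finset.sum_eq_zero
      intro i _
      by_cases h : μ i = 0
      · have := congrFun (hcol i h) j
        simp only [Pi.zero_apply] at this
        rw [this, zero_mul]
      · have hwi : w i = 0 := (mul_eq_zero.mp (hμw i)).resolve_left h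
        rw [hwi, mul_zero]
  -- assembling everything
  exact hiff1.trans (hLiff.trans ((forall_congr' fun i => imp_congr_right fun _ =>
    hciff i).trans (hcond.symm.trans hrank.symm)))
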